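/- The complement of the diagonal halting set, {n : ℕ | ¬ (φ_n n).Dom}, many-one reduces (in the sense of Mathlib's ManyOneReducible, ≤₀) to the set C := {n : ℕ | the set of ring sentences {φ | encode φ ∈ W_n} is satisfiable}. -/

import Mathlib

open FirstOrder Language

/-- Sentences of the language of rings are countable. -/
instance : Countable (Σ n, Language.ring.BoundedFormula Empty n) :=
  Language.BoundedFormula.listEncode_sigma_injective.countable

instance : Countable Language.ring.Sentence :=
  Function.Injective.countable
    (f := fun φ : Language.ring.Sentence =>
      (⟨0, φ⟩ : Σ n, Language.ring.BoundedFormula Empty n))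
    (fun _ _ h => by simpa using h)

/-- Gödel numbering of ring sentences. -/
noncomputable instance : Encodable Language.ring.Sentence :=
  Encodable.ofCountable _

/-- `W e` is the domain of the `e`-th partial computable function: the `e`-th
computably enumerable set. -/
def W (e : ℕ) : Set ℕ := {x : ℕ | ((Denumerable.ofNat Nat.Partrec.Code e).eval x).Dom}

/-- `ThM e` is the theory (set of ring sentences) produced by the `e`-th Turing machine. -/
noncomputable def ThM (e : ℕ) : Language.ring.Theory :=
  {φ : Language.ring.Sentence | Encodable.encode φ ∈ W e}

open Nat.Partrec (Code)
open Nat.Partrec.Code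

private noncomputable def c0 : ℕ := Encodable.encode (⊥ : Language.ring.Sentence)

private noncomputable def hfun : ℕ →. ℕ := fun p =>
  (Nat.rfind (fun _ => Part.some (decide (p.unpair.2 = c0)))).bind
    (fun _ => (Denumerable.ofNat Code p.unpair.1).eval p.unpair.1)

private theorem hfun_partrec : Nat.Partrec hfun := by
  have h1 : Partrec fun p : ℕ => Nat.rfind (fun _ : ℕ => Part.some (decide (p.unpair.2 = c0))) :=
    Partrec.rfind (((Primrec.eq.comp (Primrec.snd.comp Primrec.unpair)
      (Primrec.const c0)).decide.to_comp.comp Computable.fst).partrec.to₂)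
  have h2 : Partrec fun p : ℕ => (Denumerable.ofNat Code p.unpair.1).eval p.unpair.1 :=
    eval_part.comp ((Computable.ofNat Code).comp (Computable.fst.comp Computable.unpair))
      (Computable.fst.comp Computable.unpair)
  exact Partrec.nat_iff.mp (h1.bind (h2.comp Computable.fst).to₂)

private theorem hfun_dom (p : ℕ) :
    (hfun p).Dom ↔ p.unpair.2 = c0 ∧ ((Denumerable.ofNat Code p.unpair.1).eval p.unpair.1).Dom := by
  simp only [hfun, Part.bind_dom]
  constructor
  · rintro ⟨⟨m, hm⟩, hd⟩
    have := hm.1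
    simp only [Part.mem_some_iff] at this
    exact ⟨of_decide_eq_true this.symm, hd⟩
  · rintro ⟨h1, h2⟩
    refine ⟨⟨0, ?_, fun k hk => trivial⟩, h2⟩
    simp [h1]

/-- The complement of the diagonal halting set many-one reduces to
`C = {n | Th(M n) is satisfiable}`. -/
theorem stmt_5 :
    (fun n : ℕ => ¬ ((Denumerable.ofNat Nat.Partrec.Code n).eval n).Dom) ≤₀
      (fun n : ℕ => (ThM n).IsSatisfiable) := by
  obtain ⟨c, hc⟩ := exists_code.mp hfun_partrec
  refine ⟨fun n => Encodable.encode (c.curry n),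
    Primrec.to_comp (Primrec.encode.comp (primrec₂_curry.comp (Primrec.const c) Primrec.id)),
    fun n => ?_⟩
  have key : ∀ x, x ∈ W (Encodable.encode (c.curry n)) ↔
      x = c0 ∧ ((Denumerable.ofNat Code n).eval n).Dom := by
    intro x
    have h3 : ((c.curry n).eval x).Dom ↔ (Nat.pair n x).unpair.2 = c0 ∧
        ((Denumerable.ofNat Code (Nat.pair n x).unpair.1).eval
          (Nat.pair n x).unpair.1).Dom := by
      rw [eval_curry, hc]; exact hfun_dom _
    simp only [W, Set.mem_setOf_eq, Denumerable.ofNat_encode, h3, Nat.unpair_pair]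
  constructor
  · intro hn
    have hemp : ThM (Encodable.encode (c.curry n)) = ∅ := by
      ext φ
      simp only [ThM, Set.mem_setOf_eq, Set.mem_empty_iff_false, iff_false]
      intro hφ
      exact hn ((key _).mp hφ).2
    show (ThM (Encodable.encode (c.curry n))).IsSatisfiable
    rw [hemp]
    exact Theory.isSatisfiable_empty _
  · intro hsat hd
    have hb : (⊥ : Language.ring.Sentence) ∈ ThM (Encodable.encode (c.curry n)) :=
      (key c0).mpr ⟨rfl, hd⟩
    obtain ⟨M⟩ := hsat
    have := M.is_model.realize_of_mem _ hb
    simp [Sentence.Realize, BoundedFormula.realize_bot] at this
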